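/- Let T be a regular interval exchange on k intervals with endpoint set X^{(1)} = {0 = a_1 < a_2 < ⋯ < a_{k+1} = 1}. For every n ≥ 1, the set X^{(n)} = X^{(1)} ∪ T^{−1}X^{(1)} ∪ ⋯ ∪ T^{−n+1}X^{(1)} has exactly n(k−1) + 2 elements, and the endpoints of every interval I_w associated to a factor w of length n of the coding belong to X^{(n)}. -/

import Mathlib

/-- `w` occurs in the infinite word `U` at position `i`. -/
def OccursAt {A : Type*} (U : ℕ → A) (w : List A) (i : ℕ) : Prop :=
  ∀ j : Fin w.length, U (i + j) = w.get j

/-- `w` is a factor of the infinite word `U`. -/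
def IsFactor {A : Type*} (U : ℕ → A) (w : List A) : Prop := ∃ i, OccursAt U w i

/-- `U` is recurrent: every factor occurs infinitely often. -/
def Recurrent {A : Type*} (U : ℕ → A) : Prop :=
  ∀ w, IsFactor U w → ∀ N, ∃ i, N ≤ i ∧ OccursAt U w i

/-- The set of return words over `w` in `U`: words starting at an occurrence of `w`
and ending just before the next occurrence. -/
def ReturnWords {A : Type*} (U : ℕ → A) (w : List A) : Set (List A) :=
  {r | ∃ i j, OccursAt U w i ∧ OccursAt U w j ∧ i < j ∧
      (∀ t, i < t → t < j → ¬ OccursAt U w t) ∧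
      r = List.ofFn (fun t : Fin (j - i) => U (i + t))}

/-- The complexity function: number of distinct factors of length `n`. -/
noncomputable def Complexity {A : Type*} (U : ℕ → A) (n : ℕ) : ℕ :=
  Set.ncard {w : List A | w.length = n ∧ IsFactor U w}

open Set

/-- Left endpoint of the `i`-th interval: `∑_{j<i} λ_j`. -/
noncomputable def leftPt {k : ℕ} (lam : Fin k → ℝ) (i : Fin k) : ℝ :=
  ∑ j ∈ Finset.univ.filter (fun j => j < i), lam j

/-- The `i`-th exchanged interval `X_i = [∑_{j<i} λ_j, ∑_{j≤i} λ_j)`. -/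
def Xint {k : ℕ} (lam : Fin k → ℝ) (i : Fin k) : Set ℝ :=
  Set.Ico (leftPt lam i) (leftPt lam i + lam i)

/-- The translation amount `a_i = ∑_{ℓ<σ⁻¹(i)} λ_{σ(ℓ)} − ∑_{ℓ<i} λ_ℓ`. -/
noncomputable def transAmt {k : ℕ} (lam : Fin k → ℝ) (σ : Equiv.Perm (Fin k)) (i : Fin k) : ℝ :=
  (∑ j ∈ Finset.univ.filter (fun j => j < σ.symm i), lam (σ j)) - leftPt lam i

/-- `T` is the interval exchange transformation on `[0,1)` with data `(lam, σ)`
(extended by the identity outside `[0,1)`). -/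
def IsIET {k : ℕ} (lam : Fin k → ℝ) (σ : Equiv.Perm (Fin k)) (T : ℝ → ℝ) : Prop :=
  (∀ i, 0 < lam i) ∧ (∑ i, lam i = 1) ∧
  (∀ i, ∀ x ∈ Xint lam i, T x = x + transAmt lam σ i) ∧
  (∀ x, x ∉ Set.Ico (0:ℝ) 1 → T x = x)

/-- Keane's regularity condition: `T^n a_i = a_j` for interior endpoints forces `n = 0, i = j`
(stated symmetrically in `i, j`, which covers negative powers of the bijection `T`). -/
def KeaneRegular {k : ℕ} (lam : Fin k → ℝ) (T : ℝ → ℝ) : Prop :=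
  ∀ n : ℕ, ∀ i j : Fin k, (i : ℕ) ≠ 0 → (j : ℕ) ≠ 0 →
    T^[n] (leftPt lam i) = leftPt lam j → n = 0 ∧ i = j

/-- `U` is the symbolic coding of the `T`-orbit of `x`: `U n = i` iff `T^n x ∈ X_i`. -/
def IsCoding {k : ℕ} (lam : Fin k → ℝ) (T : ℝ → ℝ) (x : ℝ) (U : ℕ → Fin k) : Prop :=
  ∀ n, T^[n] x ∈ Xint lam (U n)

namespace IETAux

variable {k : ℕ}

lemma leftPt_nonneg (lam : Fin k → ℝ) (hpos : ∀ i, 0 < lam i) (i : Fin k) :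
    0 ≤ leftPt lam i :=
  Finset.sum_nonneg fun j _ => (hpos j).le

lemma leftPt_add (lam : Fin k → ℝ) (i : Fin k) :
    leftPt lam i + lam i = ∑ j ∈ Finset.univ.filter (fun j => j ≤ i), lam j := by
  have h : Finset.univ.filter (fun j => j ≤ i)
      = insert i (Finset.univ.filter (fun j => j < i)) := by
    ext j
    simp [le_iff_lt_or_eq, or_comm]
  rw [leftPt, h, Finset.sum_insert (by simp)]
  ring

lemma leftPt_add_le_of_lt (lam : Fin k → ℝ) (hpos : ∀ i, 0 < lam i) {i i' : Fin k}
    (h : i < i') : leftPt lam i + lam i ≤ leftPt lam i' := by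
  rw [leftPt_add, leftPt]
  refine Finset.sum_le_sum_of_subset_of_nonneg ?_ (fun j _ _ => (hpos j).le)
  intro j hj
  simp only [Finset.mem_filter, Finset.mem_univ, true_and] at *
  exact lt_of_le_of_lt hj h

lemma leftPt_add_le_one (lam : Fin k → ℝ) (hpos : ∀ i, 0 < lam i)
    (hsum : ∑ i, lam i = 1) (i : Fin k) : leftPt lam i + lam i ≤ 1 := by
  rw [leftPt_add, ← hsum]
  exact Finset.sum_le_sum_of_subset_of_nonneg (Finset.filter_subset _ _)
    (fun j _ _ => (hpos j).le)

lemma leftPt_lt_one (lam : Fin k → ℝ) (hpos : ∀ i, 0 < lam i)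
    (hsum : ∑ i, lam i = 1) (i : Fin k) : leftPt lam i < 1 :=
  lt_of_lt_of_le (by linarith [hpos i]) (leftPt_add_le_one lam hpos hsum i)

lemma leftPt_zero (lam : Fin k → ℝ) (i : Fin k) (hi : (i : ℕ) = 0) :
    leftPt lam i = 0 := by
  rw [leftPt]
  convert Finset.sum_empty
  ext j
  simp only [Finset.mem_filter, Finset.mem_univ, true_and, Finset.notMem_empty, iff_false,
    Fin.lt_def, hi]
  omega

lemma leftPt_pos (lam : Fin k → ℝ) (hpos : ∀ i, 0 < lam i) (i : Fin k)
    (hi : (i : ℕ) ≠ 0) : 0 < leftPt lam i := by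
  rw [leftPt]
  refine Finset.sum_pos (fun j _ => hpos j) ⟨⟨0, i.pos⟩, ?_⟩
  simp only [Finset.mem_filter, Finset.mem_univ, true_and, Fin.lt_def]
  exact Nat.pos_of_ne_zero hi

lemma leftPt_succ (lam : Fin k → ℝ) (i : Fin k) (h : (i : ℕ) + 1 < k) :
    leftPt lam ⟨(i : ℕ) + 1, h⟩ = leftPt lam i + lam i := by
  rw [leftPt_add, leftPt]
  congr 1
  ext j
  simp only [Finset.mem_filter, Finset.mem_univ, true_and, Fin.lt_def, Fin.le_def]
  omega

lemma leftPt_last (lam : Fin k → ℝ) (hsum : ∑ i, lam i = 1) (i : Fin k)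
    (h : (i : ℕ) + 1 = k) : leftPt lam i + lam i = 1 := by
  rw [leftPt_add, ← hsum]
  congr 1
  ext j
  simp only [Finset.mem_filter, Finset.mem_univ, true_and, iff_true]
  exact Fin.le_def.2 (by omega)

lemma leftPt_add_mem (lam : Fin k → ℝ) (hsum : ∑ i, lam i = 1) (i : Fin k) :
    leftPt lam i + lam i ∈ Set.range (leftPt lam) ∪ {1} := by
  rcases lt_or_eq_of_le (Nat.succ_le_of_lt i.isLt) with h | h
  · exact Set.mem_union_left _ ⟨⟨(i : ℕ) + 1, h⟩, leftPt_succ lam i h⟩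
  · exact Set.mem_union_right _ (leftPt_last lam hsum i h)

lemma Xint_subset (lam : Fin k → ℝ) (hpos : ∀ i, 0 < lam i)
    (hsum : ∑ i, lam i = 1) (i : Fin k) : Xint lam i ⊆ Set.Ico 0 1 := by
  intro x hx
  obtain ⟨h1, h2⟩ := hx
  exact ⟨le_trans (leftPt_nonneg lam hpos i) h1,
    lt_of_lt_of_le h2 (leftPt_add_le_one lam hpos hsum i)⟩

lemma Xint_unique (lam : Fin k → ℝ) (hpos : ∀ i, 0 < lam i) {x : ℝ} {i i' : Fin k}
    (h : x ∈ Xint lam i) (h' : x ∈ Xint lam i') : i = i' := by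
  rcases lt_trichotomy i i' with hlt | he | hlt
  · exact absurd (lt_of_lt_of_le h.2 (le_trans (leftPt_add_le_of_lt lam hpos hlt) h'.1))
      (lt_irrefl x)
  · exact he
  · exact absurd (lt_of_lt_of_le h'.2 (le_trans (leftPt_add_le_of_lt lam hpos hlt) h.1))
      (lt_irrefl x)

lemma exists_mem_Xint (lam : Fin k → ℝ) (hpos : ∀ i, 0 < lam i)
    (hsum : ∑ i, lam i = 1) {x : ℝ} (hx : x ∈ Set.Ico (0:ℝ) 1) :
    ∃ i, x ∈ Xint lam i := by
  have hk : 0 < k := by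
    rcases Nat.eq_zero_or_pos k with h | h
    · subst h; simp at hsum
    · exact h
  set S := Finset.univ.filter (fun i : Fin k => leftPt lam i ≤ x) with hS
  have hne : S.Nonempty := ⟨⟨0, hk⟩, by
    simp only [hS, Finset.mem_filter, Finset.mem_univ, true_and]
    rw [leftPt_zero lam _ rfl]; exact hx.1⟩
  set i₀ := S.max' hne with hi₀
  have hmem : leftPt lam i₀ ≤ x := by
    have := S.max'_mem hne
    simp only [hS, Finset.mem_filter] at this
    exact this.2
  refine ⟨i₀, hmem, ?_⟩
  by_contra hcon
  push_neg at hcon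
  rcases lt_or_eq_of_le (Nat.succ_le_of_lt i₀.isLt) with h | h
  · have : (⟨(i₀ : ℕ) + 1, h⟩ : Fin k) ∈ S := by
      simp only [hS, Finset.mem_filter, Finset.mem_univ, true_and]
      rw [leftPt_succ lam i₀ h]; exact hcon
    have hle := S.le_max' _ this
    rw [← hi₀] at hle
    exact absurd hle (by simp [Fin.lt_def, Fin.le_def])
  · rw [leftPt_last lam hsum i₀ h] at hcon
    exact absurd hx.2 (not_lt.2 hcon)

end IETAux
namespace IETAux

variable {k : ℕ}

lemma transAmt_eq (lam : Fin k → ℝ) (σ : Equiv.Perm (Fin k)) (i : Fin k) :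
    transAmt lam σ i = leftPt (lam ∘ σ) (σ.symm i) - leftPt lam i := rfl

lemma transAmt_symm (lam : Fin k → ℝ) (σ : Equiv.Perm (Fin k)) (p : Fin k) :
    transAmt (lam ∘ σ) σ.symm p = leftPt lam (σ p) - leftPt (lam ∘ σ) p := by
  rw [transAmt, leftPt]
  congr 1
  rw [Equiv.symm_symm]
  exact Finset.sum_congr rfl (fun j _ => by simp)

lemma lam_comp_symm (lam : Fin k → ℝ) (σ : Equiv.Perm (Fin k)) (i : Fin k) :
    (lam ∘ σ) (σ.symm i) = lam i := by simp

lemma sum_comp (lam : Fin k → ℝ) (σ : Equiv.Perm (Fin k)) :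
    ∑ i, (lam ∘ σ) i = ∑ i, lam i :=
  Equiv.sum_comp σ lam

/-- `T` maps `Xint lam i` into `Xint (lam ∘ σ) (σ.symm i)`. -/
lemma T_mem_Xint {lam : Fin k → ℝ} {σ : Equiv.Perm (Fin k)} {T : ℝ → ℝ}
    (hT : IsIET lam σ T) {i : Fin k} {x : ℝ} (hx : x ∈ Xint lam i) :
    T x ∈ Xint (lam ∘ σ) (σ.symm i) := by
  rw [hT.2.2.1 i x hx, transAmt_eq]
  obtain ⟨h1, h2⟩ := hx
  constructor
  · linarith
  · rw [lam_comp_symm]; linarith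

open Classical in
/-- A concrete IET with given data. -/
noncomputable def Tdef (lam : Fin k → ℝ) (σ : Equiv.Perm (Fin k)) : ℝ → ℝ :=
  fun x => if h : ∃ i, x ∈ Xint lam i then x + transAmt lam σ h.choose else x

lemma Tdef_isIET (lam : Fin k → ℝ) (σ : Equiv.Perm (Fin k))
    (hpos : ∀ i, 0 < lam i) (hsum : ∑ i, lam i = 1) : IsIET lam σ (Tdef lam σ) := by
  refine ⟨hpos, hsum, ?_, ?_⟩
  · intro i x hx
    have h : ∃ i, x ∈ Xint lam i := ⟨i, hx⟩
    rw [Tdef]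
    simp only [dif_pos h]
    rw [Xint_unique lam hpos h.choose_spec hx]
  · intro x hx
    have h : ¬ ∃ i, x ∈ Xint lam i := by
      rintro ⟨i, hi⟩
      exact hx (Xint_subset lam hpos hsum i hi)
    rw [Tdef]
    simp only [dif_neg h]

lemma isIET_inv_data {lam : Fin k → ℝ} {σ : Equiv.Perm (Fin k)}
    (hpos : ∀ i, 0 < lam i) (hsum : ∑ i, lam i = 1) :
    IsIET (lam ∘ σ) σ.symm (Tdef (lam ∘ σ) σ.symm) :=
  Tdef_isIET _ _ (fun i => hpos (σ i)) (by rw [sum_comp]; exact hsum)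

/-- left inverse of an IET. -/
lemma leftInv {lam : Fin k → ℝ} {σ : Equiv.Perm (Fin k)} {T T' : ℝ → ℝ}
    (hT : IsIET lam σ T) (hT' : IsIET (lam ∘ σ) σ.symm T') (x : ℝ) :
    T' (T x) = x := by
  by_cases hx : x ∈ Set.Ico (0:ℝ) 1
  · obtain ⟨i, hi⟩ := exists_mem_Xint lam hT.1 hT.2.1 hx
    have h1 : T x ∈ Xint (lam ∘ σ) (σ.symm i) := T_mem_Xint hT hi
    rw [hT'.2.2.1 _ _ h1, transAmt_symm, hT.2.2.1 i x hi, transAmt_eq]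
    simp only [Equiv.apply_symm_apply]
    ring
  · rw [hT.2.2.2 x hx]
    exact hT'.2.2.2 x hx

/-- The inverse of an IET. -/
lemma exists_inverse {lam : Fin k → ℝ} {σ : Equiv.Perm (Fin k)} {T : ℝ → ℝ}
    (hT : IsIET lam σ T) :
    ∃ T', IsIET (lam ∘ σ) σ.symm T' ∧ (∀ x, T' (T x) = x) ∧ (∀ x, T (T' x) = x) := by
  refine ⟨Tdef (lam ∘ σ) σ.symm, isIET_inv_data hT.1 hT.2.1, fun x => leftInv hT (isIET_inv_data hT.1 hT.2.1) x, fun x => ?_⟩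
  have h2 : IsIET ((lam ∘ σ) ∘ σ.symm) σ.symm.symm T := by
    have e1 : (lam ∘ σ) ∘ σ.symm = lam := by
      funext j; simp
    rw [e1, Equiv.symm_symm]
    exact hT
  exact leftInv (isIET_inv_data hT.1 hT.2.1) h2 x

end IETAux
namespace IETAux

variable {k : ℕ} {lam : Fin k → ℝ} {σ : Equiv.Perm (Fin k)} {T : ℝ → ℝ}

lemma one_fixed (hT : IsIET lam σ T) : T 1 = 1 :=
  hT.2.2.2 1 (by simp)

lemma card_Xn (hT : IsIET lam σ T) (hreg : KeaneRegular lam T) (n : ℕ) (hn : 1 ≤ n) :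
    (⋃ j ∈ Finset.range n, T^[j] ⁻¹' (Set.range (leftPt lam) ∪ {1})).ncard
      = n * (k - 1) + 2 := by
  classical
  have hpos := hT.1
  have hsum := hT.2.1
  have hk : 0 < k := by
    rcases Nat.eq_zero_or_pos k with h | h
    · subst h; simp at hsum
    · exact h
  obtain ⟨T', hT', hl, hr⟩ := exists_inverse hT
  have hiterlr : ∀ j x, T^[j] (T'^[j] x) = x := fun j x =>
    (Function.LeftInverse.iterate hr j) x
  have hiterrl : ∀ j x, T'^[j] (T^[j] x) = x := fun j x =>
    (Function.LeftInverse.iterate hl j) x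
  have hone : ∀ j, T^[j] 1 = 1 := fun j => Function.iterate_fixed (one_fixed hT) j
  have hone' : ∀ j, T'^[j] 1 = 1 := fun j =>
    Function.iterate_fixed (hT'.2.2.2 1 (by simp)) j
  set z0 : Fin k := ⟨0, hk⟩ with hz0
  have hlz0 : leftPt lam z0 = 0 := leftPt_zero lam z0 rfl
  -- T sends leftPt (σ z0) to 0
  have hT0 : T (leftPt lam (σ z0)) = 0 := by
    have hmem : leftPt lam (σ z0) ∈ Xint lam (σ z0) :=
      ⟨le_refl _, by linarith [hpos (σ z0)]⟩
    rw [hT.2.2.1 _ _ hmem, transAmt_eq]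
    rw [Equiv.symm_apply_apply, leftPt_zero (lam ∘ σ) z0 rfl]
    ring
  have hT'0 : T' 0 = leftPt lam (σ z0) := by rw [← hT0, hl]
  -- forward orbit of 0 never hits an interior endpoint
  have horbit : ∀ (j : ℕ) (i : Fin k), (i : ℕ) ≠ 0 → T^[j] 0 ≠ leftPt lam i := by
    intro j i hi
    by_cases hσ : ((σ z0 : Fin k) : ℕ) = 0
    · have h0 : T 0 = 0 := by
        have hz := leftPt_zero lam (σ z0) hσ
        rw [hz] at hT0
        exact hT0
      rw [Function.iterate_fixed h0 j]
      exact fun h => (ne_of_gt (leftPt_pos lam hpos i hi)) h.symm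
    · intro h
      have h2 : T^[j + 1] (leftPt lam (σ z0)) = leftPt lam i := by
        rw [Function.iterate_succ_apply, hT0, h]
      exact absurd (hreg (j + 1) (σ z0) i hσ hi h2).1 (Nat.succ_ne_zero j)
  -- the set of "new" points
  set g : ℕ × Fin k → ℝ := fun p => T'^[p.1] (leftPt lam p.2) with hg
  set D : Finset (ℕ × Fin k) :=
    Finset.range n ×ˢ Finset.univ.filter (fun i : Fin k => (i : ℕ) ≠ 0) with hD
  set Nfin : Finset ℝ := D.image g with hN
  have happly : ∀ (j j' : ℕ) (i : Fin k), j ≤ j' → T^[j'] (T'^[j] (leftPt lam i))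
      = T^[j' - j] (leftPt lam i) := by
    intro j j' i hle
    have : j' = (j' - j) + j := by omega
    rw [this, Function.iterate_add_apply, hiterlr]
    congr 1
    omega
  have hinj : Set.InjOn g D := by
    have key : ∀ p q : ℕ × Fin k, p ∈ D → q ∈ D → p.1 ≤ q.1 → g p = g q → p = q := by
      intro p q hp hq hle he
      simp only [hD, Finset.mem_product, Finset.mem_range, Finset.mem_filter] at hp hq
      have h1 : T^[q.1] (g p) = T^[q.1 - p.1] (leftPt lam p.2) := happly _ _ _ hle
      have h2 : T^[q.1] (g q) = leftPt lam q.2 := by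
        have := happly q.1 q.1 q.2 le_rfl
        simpa using this
      rw [he, h2] at h1
      obtain ⟨hz, hi⟩ := hreg (q.1 - p.1) p.2 q.2 hp.2.2 hq.2.2 h1.symm
      have : p.1 = q.1 := by omega
      exact Prod.ext this hi
    intro p hp q hq he
    rcases le_total p.1 q.1 with h | h
    · exact key p q hp hq h he
    · exact (key q p hq hp h he.symm).symm
  -- 0 and 1 are not in Nfin
  have h0N : (0 : ℝ) ∉ Nfin := by
    simp only [hN, Finset.mem_image, not_exists]
    rintro p ⟨hp, hgp⟩
    simp only [hD, Finset.mem_product, Finset.mem_range, Finset.mem_filter] at hp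
    have : T^[p.1] 0 = leftPt lam p.2 := by
      rw [← hgp, hg, hiterlr]
    exact horbit p.1 p.2 hp.2.2 this
  have h1N : (1 : ℝ) ∉ Nfin := by
    simp only [hN, Finset.mem_image, not_exists]
    rintro p ⟨hp, hgp⟩
    simp only [hD, Finset.mem_product, Finset.mem_range, Finset.mem_filter] at hp
    have : T^[p.1] 1 = leftPt lam p.2 := by
      rw [← hgp, hg, hiterlr]
    rw [hone] at this
    have h2 := leftPt_lt_one lam hpos hsum p.2
    linarith
  -- backward orbit of 0 stays in insert 0 Nfin
  have horb0 : ∀ j, j < n → T'^[j] 0 ∈ insert (0:ℝ) (Nfin : Set ℝ) := by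
    intro j
    induction j with
    | zero => intro _; simp
    | succ m ih =>
      intro hm
      rw [Function.iterate_succ_apply, hT'0]
      by_cases hσ : ((σ z0 : Fin k) : ℕ) = 0
      · rw [leftPt_zero lam (σ z0) hσ]
        exact ih (by omega)
      · refine Set.mem_insert_iff.2 (Or.inr (Finset.mem_coe.2 (Finset.mem_image.2
          ⟨(m, σ z0), ?_, rfl⟩)))
        simp only [hD, Finset.mem_product, Finset.mem_range, Finset.mem_filter,
          Finset.mem_univ, true_and]
        exact ⟨by omega, hσ⟩
  -- set equality
  have hset : (⋃ j ∈ Finset.range n, T^[j] ⁻¹' (Set.range (leftPt lam) ∪ {1}))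
      = insert (1:ℝ) (insert (0:ℝ) (Nfin : Set ℝ)) := by
    ext y
    simp only [Set.mem_iUnion, Finset.mem_range, Set.mem_preimage, Set.mem_union,
      Set.mem_range, Set.mem_singleton_iff, exists_prop]
    constructor
    · rintro ⟨j, hj, ⟨i, hi⟩ | h1⟩
      · have hy : y = T'^[j] (leftPt lam i) := by rw [hi, hiterrl]
        by_cases hiz : (i : ℕ) = 0
        · rw [leftPt_zero lam i hiz] at hy
          subst hy
          exact Set.mem_insert_iff.2 (Or.inr (horb0 j hj))
        · subst hy
          refine Set.mem_insert_iff.2 (Or.inr (Set.mem_insert_iff.2 (Or.inr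
            (Finset.mem_coe.2 (Finset.mem_image.2 ⟨(j, i), ?_, rfl⟩)))))
          simp only [hD, Finset.mem_product, Finset.mem_range, Finset.mem_filter,
            Finset.mem_univ, true_and]
          exact ⟨hj, hiz⟩
      · have : y = 1 := by rw [← hiterrl j y, h1, hone']
        exact this ▸ Set.mem_insert _ _
    · intro hy
      rcases Set.mem_insert_iff.1 hy with rfl | hy
      · exact ⟨0, hn, Or.inr rfl⟩
      rcases Set.mem_insert_iff.1 hy with rfl | hy
      · exact ⟨0, hn, Or.inl ⟨z0, hlz0⟩⟩
      · obtain ⟨p, hp, hgp⟩ := Finset.mem_image.1 (Finset.mem_coe.1 hy)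
        simp only [hD, Finset.mem_product, Finset.mem_range, Finset.mem_filter] at hp
        refine ⟨p.1, hp.1, Or.inl ⟨p.2, ?_⟩⟩
        rw [← hgp]
        exact (hiterlr p.1 (leftPt lam p.2)).symm
  rw [hset]
  have hcoe : insert (1:ℝ) (insert (0:ℝ) (Nfin : Set ℝ))
      = ((insert (1:ℝ) (insert (0:ℝ) Nfin) : Finset ℝ) : Set ℝ) := by
    simp
  rw [hcoe, Set.ncard_coe_finset]
  have hcard : Nfin.card = n * (k - 1) := by
    rw [hN, Finset.card_image_of_injOn hinj, hD, Finset.card_product, Finset.card_range]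
    congr 1
    have : Finset.univ.filter (fun i : Fin k => (i : ℕ) ≠ 0) = Finset.univ.erase z0 := by
      ext i
      simp only [Finset.mem_filter, Finset.mem_univ, true_and, Finset.mem_erase, and_true]
      constructor
      · intro h he; exact h (by rw [he])
      · intro h he
        exact h (Fin.ext he)
    rw [this, Finset.card_erase_of_mem (Finset.mem_univ _), Finset.card_univ, Fintype.card_fin]
  have h1' : (1:ℝ) ∉ insert (0:ℝ) Nfin := by
    simp only [Finset.mem_insert]
    push_neg
    exact ⟨one_ne_zero, h1N⟩
  rw [Finset.card_insert_of_notMem h1', Finset.card_insert_of_notMem h0N, hcard]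

end IETAux
namespace IETAux

variable {k : ℕ} {lam : Fin k → ℝ} {σ : Equiv.Perm (Fin k)} {T : ℝ → ℝ}

lemma cylinder (hT : IsIET lam σ T) :
    ∀ (n : ℕ) (w : Fin (n+1) → Fin k),
      (⋂ i : Fin (n+1), T^[(i : ℕ)] ⁻¹' Xint lam (w i)).Nonempty →
      ∃ α β, α < β ∧
        (⋂ i : Fin (n+1), T^[(i : ℕ)] ⁻¹' Xint lam (w i)) = Set.Ico α β ∧
        α ∈ ⋃ j ∈ Finset.range (n+1), T^[j] ⁻¹' (Set.range (leftPt lam) ∪ {1}) ∧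
        β ∈ ⋃ j ∈ Finset.range (n+1), T^[j] ⁻¹' (Set.range (leftPt lam) ∪ {1}) := by
  intro n
  induction n with
  | zero =>
    intro w _
    have hone : (⋂ i : Fin (0+1), T^[(i:ℕ)] ⁻¹' Xint lam (w i)) = Xint lam (w 0) := by
      apply Set.eq_of_subset_of_subset
      · intro y hy
        have h2 := Set.mem_iInter.1 hy 0
        simpa using h2
      · intro y hy
        refine Set.mem_iInter.2 fun i => ?_
        have h0 : i = 0 := by
          have := i.isLt
          exact Fin.ext (by omega)
        subst h0
        simpa using hy
    refine ⟨leftPt lam (w 0), leftPt lam (w 0) + lam (w 0),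
      by linarith [hT.1 (w 0)], hone, ?_, ?_⟩
    · simp only [Set.mem_iUnion, exists_prop]
      refine ⟨0, by simp, ?_⟩
      simp only [Function.iterate_zero, Set.preimage_id, Set.preimage_id']
      exact Set.mem_union_left _ ⟨w 0, rfl⟩
    · simp only [Set.mem_iUnion, exists_prop]
      refine ⟨0, by simp, ?_⟩
      simp only [Function.iterate_zero, Set.preimage_id, Set.preimage_id']
      exact leftPt_add_mem lam hT.2.1 (w 0)
  | succ m ih =>
    intro w hne
    set wt : Fin (m+1) → Fin k := fun i => w i.succ with hwt
    have hsplit : (⋂ i : Fin (m+2), T^[(i:ℕ)] ⁻¹' Xint lam (w i))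
        = Xint lam (w 0) ∩ T ⁻¹' (⋂ i : Fin (m+1), T^[(i:ℕ)] ⁻¹' Xint lam (wt i)) := by
      ext y
      simp only [Set.mem_iInter, Set.mem_inter_iff, Set.mem_preimage]
      constructor
      · intro h
        refine ⟨by simpa using h 0, fun i => ?_⟩
        have h2 := h i.succ
        rwa [Fin.val_succ, Function.iterate_succ_apply] at h2
      · rintro ⟨h0, h⟩ i
        refine Fin.cases ?_ (fun i' => ?_) i
        · simpa using h0
        · have h2 := h i'
          rw [Fin.val_succ, Function.iterate_succ_apply]
          exact h2
    have hneT : (⋂ i : Fin (m+1), T^[(i:ℕ)] ⁻¹' Xint lam (wt i)).Nonempty := by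
      obtain ⟨y, hy⟩ := hne
      rw [hsplit] at hy
      exact ⟨T y, hy.2⟩
    obtain ⟨α', β', hab', heq', hα', hβ'⟩ := ih wt hneT
    set a := w 0 with ha
    set la := leftPt lam a with hla
    set t := transAmt lam σ a with ht
    have hXa : ∀ y ∈ Xint lam a, T y = y + t := hT.2.2.1 a
    have hIco : (⋂ i : Fin (m+2), T^[(i:ℕ)] ⁻¹' Xint lam (w i))
        = Set.Ico (max la (α'-t)) (min (la + lam a) (β'-t)) := by
      rw [hsplit, heq']
      ext y
      simp only [Set.mem_inter_iff, Set.mem_preimage, Set.mem_Ico, Xint, ← hla]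
      constructor
      · rintro ⟨hy, hTy⟩
        rw [hXa y hy] at hTy
        exact ⟨max_le hy.1 (by linarith [hTy.1]), lt_min hy.2 (by linarith [hTy.2])⟩
      · intro hy
        have h1 : y ∈ Xint lam a :=
          ⟨le_trans (le_max_left _ _) hy.1, lt_of_lt_of_le hy.2 (min_le_left _ _)⟩
        refine ⟨h1, ?_⟩
        rw [hXa y h1]
        have h3 := le_trans (le_max_right _ _) hy.1
        have h4 := lt_of_lt_of_le hy.2 (min_le_right _ _)
        exact ⟨by linarith, by linarith⟩
    have hab : max la (α'-t) < min (la + lam a) (β'-t) := by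
      obtain ⟨y, hy⟩ := hne
      rw [hIco] at hy
      exact lt_of_le_of_lt hy.1 hy.2
    refine ⟨_, _, hab, hIco, ?_, ?_⟩
    · rcases max_cases la (α'-t) with ⟨hmax, _⟩ | ⟨hmax, h2⟩
      · rw [hmax]
        simp only [Set.mem_iUnion, exists_prop]
        refine ⟨0, by simp, ?_⟩
        simp only [Function.iterate_zero, Set.preimage_id, Set.preimage_id']
        exact Set.mem_union_left _ ⟨a, rfl⟩
      · rw [hmax]
        have hmem : α' - t ∈ Xint lam a := by
          refine ⟨le_of_lt h2, ?_⟩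
          have : α' - t < min (la + lam a) (β'-t) := hmax ▸ hab
          rw [← hla]
          exact lt_of_lt_of_le this (min_le_left _ _)
        have hTα : T (α' - t) = α' := by rw [hXa _ hmem]; ring
        simp only [Set.mem_iUnion, exists_prop] at hα' ⊢
        obtain ⟨j, hj, hmemj⟩ := hα'
        refine ⟨j + 1, ?_, ?_⟩
        · simp only [Finset.mem_range] at hj ⊢; omega
        · simp only [Set.mem_preimage, Function.iterate_succ_apply, hTα]
          exact hmemj
    · rcases min_cases (la + lam a) (β'-t) with ⟨hmin, _⟩ | ⟨hmin, h2⟩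
      · rw [hmin]
        simp only [Set.mem_iUnion, exists_prop]
        refine ⟨0, by simp, ?_⟩
        simp only [Function.iterate_zero, Set.preimage_id, Set.preimage_id']
        exact leftPt_add_mem lam hT.2.1 a
      · rw [hmin]
        have hmem : β' - t ∈ Xint lam a := by
          constructor
          · rw [← hla]
            exact le_of_lt (lt_of_le_of_lt (le_max_left la (α'-t))
              (lt_of_lt_of_le hab (min_le_right _ _)))
          · rw [← hla]; exact h2
        have hTβ : T (β' - t) = β' := by rw [hXa _ hmem]; ring
        simp only [Set.mem_iUnion, exists_prop] at hβ' ⊢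
        obtain ⟨j, hj, hmemj⟩ := hβ'
        refine ⟨j + 1, ?_, ?_⟩
        · simp only [Finset.mem_range] at hj ⊢; omega
        · simp only [Set.mem_preimage, Function.iterate_succ_apply, hTβ]
          exact hmemj

end IETAux

theorem endpoints_of_cylinders_and_card_of_preimage_partition
    (k : ℕ) (lam : Fin k → ℝ) (σ : Equiv.Perm (Fin k)) (T : ℝ → ℝ)
    (hT : IsIET lam σ T) (hreg : KeaneRegular lam T)
    (x : ℝ) (hx : x ∈ Set.Ico (0:ℝ) 1)
    (U : ℕ → Fin k) (hU : IsCoding lam T x U)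
    (X1 : Set ℝ) (hX1 : X1 = Set.range (leftPt lam) ∪ {1})
    (n : ℕ) (hn : 1 ≤ n)
    (Xn : Set ℝ) (hXn : Xn = ⋃ j ∈ Finset.range n, T^[j] ⁻¹' X1) :
    Xn.ncard = n * (k - 1) + 2 ∧
      ∀ w : Fin n → Fin k, IsFactor U (List.ofFn w) →
        sInf (⋂ i : Fin n, T^[(i : ℕ)] ⁻¹' Xint lam (w i)) ∈ Xn ∧
        sSup (⋂ i : Fin n, T^[(i : ℕ)] ⁻¹' Xint lam (w i)) ∈ Xn := by
  subst hX1 hXn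
  constructor
  · exact IETAux.card_Xn hT hreg n hn
  · obtain ⟨m, rfl⟩ : ∃ m, n = m + 1 := ⟨n - 1, by omega⟩
    intro w hf
    obtain ⟨p, hp⟩ := hf
    have hlen : (List.ofFn w).length = m + 1 := List.length_ofFn (f := w)
    have hnel : (⋂ i : Fin (m+1), T^[(i:ℕ)] ⁻¹' Xint lam (w i)).Nonempty := by
      refine ⟨T^[p] x, Set.mem_iInter.2 fun i => ?_⟩
      simp only [Set.mem_preimage, ← Function.iterate_add_apply]
      have hU2 := hU ((i : ℕ) + p)
      have hv := hp (Fin.cast hlen.symm i)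
      rw [List.get_ofFn] at hv
      have hval : ((Fin.cast hlen.symm i : Fin (List.ofFn w).length)) = (i : ℕ) := rfl
      have hcast : w (Fin.cast (List.length_ofFn (f := w)) (Fin.cast hlen.symm i)) = w i := by
        congr 1
      rw [hcast] at hv
      have hv2 : U (p + (i : ℕ)) = w i := hv
      rw [Nat.add_comm ((i : ℕ)) p, ← hv2]
      exact hU (p + (i : ℕ))
    obtain ⟨α, β, hab, heq, hα, hβ⟩ := IETAux.cylinder hT m w hnel
    rw [heq, csInf_Ico hab, csSup_Ico hab]
    exact ⟨hα, hβ⟩
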